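/- arXiv:1711.01050 — 9 statements merged into one kernel-verified Lean document; each statement's English description precedes it below -/
import Mathlib

section
/- Under Assumption 1, the best-response map T is a contraction on ℝ^N with respect to the supremum norm: for all x, y ∈ ℝ^N, ‖T(x) − T(y)‖_∞ ≤ κ · ‖x − y‖_∞, where κ = max_i (Σ_{j=1}^N g_{ij})/(2b_i) satisfies 0 ≤ κ < 1. -/
/-- Under Assumption 1, the best-response map `T` is a contraction on `ℝ^N` in the
supremum norm, with contraction constant `κ = max_i (Σ_j g_{ij}) / (2 bᵢ)`, `0 ≤ κ < 1`. -/
theorem stmt2 (N : ℕ) (hN : 1 ≤ N)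
    (a b r : Fin N → ℝ) (c : ℝ) (hb : ∀ i, 0 < b i)
    (G : Matrix (Fin N) (Fin N) ℝ)
    (hGsym : ∀ i j, G i j = G j i)
    (hGnonneg : ∀ i j, 0 ≤ G i j)
    (hGdiag : ∀ i, G i i = 0)
    (hA : ∀ i, ∑ j, G i j < 2 * b i)
    (T : (Fin N → ℝ) → (Fin N → ℝ))
    (hT : ∀ x i, T x i = max 0 ((r i - c + a i + ∑ j, G i j * x j) / (2 * b i)))
    (κ : ℝ) (hκ : κ = ⨆ i, (∑ j, G i j) / (2 * b i)) :
    0 ≤ κ ∧ κ < 1 ∧ ∀ x y : Fin N → ℝ, ‖T x - T y‖ ≤ κ * ‖x - y‖ := by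
  have hne : Nonempty (Fin N) := ⟨⟨0, hN⟩⟩
  set f : Fin N → ℝ := fun i => (∑ j, G i j) / (2 * b i) with hf
  have hfnn : ∀ i, 0 ≤ f i := fun i =>
    div_nonneg (Finset.sum_nonneg fun j _ => hGnonneg i j) (by linarith [hb i])
  have hflt : ∀ i, f i < 1 := fun i => (div_lt_one (by linarith [hb i])).mpr (hA i)
  obtain ⟨i₀, hi₀⟩ := Finite.exists_max f
  have hκeq : κ = f i₀ := by
    rw [hκ]
    exact le_antisymm (ciSup_le hi₀) (le_ciSup (Finite.bddAbove_range f) i₀)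
  have hκnn : 0 ≤ κ := hκeq ▸ hfnn i₀
  refine ⟨hκnn, hκeq ▸ hflt i₀, ?_⟩
  intro x y
  have hmn : 0 ≤ κ * ‖x - y‖ := mul_nonneg hκnn (norm_nonneg _)
  rw [pi_norm_le_iff_of_nonneg hmn]
  intro i
  have hbi : (0:ℝ) < 2 * b i := by linarith [hb i]
  set A := (r i - c + a i + ∑ j, G i j * x j) / (2 * b i) with hAdef
  set B := (r i - c + a i + ∑ j, G i j * y j) / (2 * b i) with hBdef
  have h1 : |max 0 A - max 0 B| ≤ |A - B| := by
    rw [max_comm 0 A, max_comm 0 B]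
    exact abs_max_sub_max_le_abs A B 0
  have hAB : A - B = (∑ j, G i j * (x j - y j)) / (2 * b i) := by
    rw [hAdef, hBdef, div_sub_div_same]
    congr 1
    simp only [mul_sub]
    rw [Finset.sum_sub_distrib]
    ring
  have h2 : |A - B| ≤ f i * ‖x - y‖ := by
    rw [hAB, abs_div, abs_of_pos hbi, hf]
    rw [div_mul_eq_mul_div]
    gcongr
    calc |∑ j, G i j * (x j - y j)| ≤ ∑ j, |G i j * (x j - y j)| :=
          Finset.abs_sum_le_sum_abs _ _
      _ ≤ ∑ j, G i j * ‖x - y‖ := by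
          apply Finset.sum_le_sum
          intro j _
          rw [abs_mul, abs_of_nonneg (hGnonneg i j)]
          apply mul_le_mul_of_nonneg_left ?_ (hGnonneg i j)
          have := norm_le_pi_norm (x - y) j
          simpa [Real.norm_eq_abs] using this
      _ = (∑ j, G i j) * ‖x - y‖ := by rw [Finset.sum_mul]
  have h3 : f i * ‖x - y‖ ≤ κ * ‖x - y‖ := by
    apply mul_le_mul_of_nonneg_right _ (norm_nonneg _)
    rw [hκeq]; exact hi₀ i
  calc ‖(T x - T y) i‖ = |max 0 A - max 0 B| := by
        simp [hT, Real.norm_eq_abs, hAdef, hBdef]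
    _ ≤ |A - B| := h1
    _ ≤ f i * ‖x - y‖ := h2
    _ ≤ κ * ‖x - y‖ := h3
end

section
/- (Theorem 1) Under Assumption 1, there exists exactly one vector x* ∈ ℝ^N satisfying x*_i = max{0, (r_i − c + a_i + Σ_{j=1}^N g_{ij} x*_j)/(2b_i)} for every i; i.e., the Nash equilibrium of the participation subgame exists and is unique. -/
/-- Theorem 1: under Assumption 1, there exists exactly one Nash equilibrium of the
participation subgame, i.e. exactly one fixed point of the best-response map. -/
theorem stmt3 (N : ℕ) (hN : 1 ≤ N)
    (a b r : Fin N → ℝ) (c : ℝ) (hb : ∀ i, 0 < b i)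
    (G : Matrix (Fin N) (Fin N) ℝ)
    (hGsym : ∀ i j, G i j = G j i)
    (hGnonneg : ∀ i j, 0 ≤ G i j)
    (hGdiag : ∀ i, G i i = 0)
    (hA : ∀ i, ∑ j, G i j < 2 * b i) :
    ∃! x : Fin N → ℝ,
      ∀ i, x i = max 0 ((r i - c + a i + ∑ j, G i j * x j) / (2 * b i)) := by
  haveI : NeZero N := ⟨Nat.one_le_iff_ne_zero.mp hN⟩
  set T : (Fin N → ℝ) → (Fin N → ℝ) := fun x i =>
    max 0 ((r i - c + a i + ∑ j, G i j * x j) / (2 * b i)) with hT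
  -- contraction constant
  set q : ℝ := Finset.univ.sup' (Finset.univ_nonempty) (fun i => (∑ j, G i j) / (2 * b i))
    with hq
  have hq0 : 0 ≤ q := by
    obtain ⟨i⟩ := (inferInstance : Nonempty (Fin N))
    refine le_trans ?_ (Finset.le_sup' _ (Finset.mem_univ i))
    have := hb i
    exact div_nonneg (Finset.sum_nonneg fun j _ => hGnonneg i j) (by positivity)
  have hq1 : q < 1 := by
    rw [hq, Finset.sup'_lt_iff]
    intro i _
    rw [div_lt_one (by have := hb i; linarith)]
    exact hA i
  have hqi : ∀ i, (∑ j, G i j) / (2 * b i) ≤ q := by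
    intro i
    rw [hq]
    exact Finset.le_sup' (fun i => (∑ j, G i j) / (2 * b i)) (Finset.mem_univ i)
  set K : NNReal := q.toNNReal with hK
  have hKq : (K : ℝ) = q := Real.coe_toNNReal q hq0
  have hlip : LipschitzWith K T := by
    apply LipschitzWith.of_dist_le_mul
    intro x y
    rw [dist_pi_le_iff (by positivity)]
    intro i
    have h1 : dist (T x i) (T y i) ≤
        dist ((r i - c + a i + ∑ j, G i j * x j) / (2 * b i))
             ((r i - c + a i + ∑ j, G i j * y j) / (2 * b i)) := by
      simp only [hT, Real.dist_eq, max_comm (0:ℝ)]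
      exact abs_max_sub_max_le_abs _ _ _
    have h2 : dist ((r i - c + a i + ∑ j, G i j * x j) / (2 * b i))
             ((r i - c + a i + ∑ j, G i j * y j) / (2 * b i))
        = |∑ j, G i j * (x j - y j)| / (2 * b i) := by
      have key : (r i - c + a i + ∑ j, G i j * x j) - (r i - c + a i + ∑ j, G i j * y j)
          = ∑ j, G i j * (x j - y j) := by
        simp [mul_sub, Finset.sum_sub_distrib]
      rw [Real.dist_eq, div_sub_div_same, key, abs_div, abs_of_pos (show (0:ℝ) < 2 * b i from by have := hb i; linarith)]
    have h3 : |∑ j, G i j * (x j - y j)| ≤ (∑ j, G i j) * dist x y := by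
      calc |∑ j, G i j * (x j - y j)| ≤ ∑ j, |G i j * (x j - y j)| :=
            Finset.abs_sum_le_sum_abs _ _
        _ ≤ ∑ j, G i j * dist x y := by
            apply Finset.sum_le_sum
            intro j _
            rw [abs_mul, abs_of_nonneg (hGnonneg i j)]
            exact mul_le_mul_of_nonneg_left
              ((Real.dist_eq _ _ ▸ dist_le_pi_dist x y j)) (hGnonneg i j)
        _ = (∑ j, G i j) * dist x y := by rw [← Finset.sum_mul]
    calc dist (T x i) (T y i) ≤ |∑ j, G i j * (x j - y j)| / (2 * b i) := h1.trans_eq h2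
      _ ≤ ((∑ j, G i j) * dist x y) / (2 * b i) := by
          have := hb i
          gcongr
      _ = ((∑ j, G i j) / (2 * b i)) * dist x y := by ring
      _ ≤ q * dist x y := mul_le_mul_of_nonneg_right (hqi i) dist_nonneg
      _ = K * dist x y := by rw [hKq]
  have hcontr : ContractingWith K T := ⟨by rw [← NNReal.coe_lt_one] at *; simpa [hKq] using hq1, hlip⟩
  have hfix : Function.IsFixedPt T (ContractingWith.fixedPoint T hcontr) :=
    hcontr.fixedPoint_isFixedPt
  refine ⟨ContractingWith.fixedPoint T hcontr, ?_, ?_⟩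
  · intro i
    conv_lhs => rw [← hfix]
  · intro y hy
    exact hcontr.fixedPoint_unique' (funext fun i => (hy i).symm) hfix
end

section
/- (Proposition 1) Under Assumption 1, the simultaneous best-response iteration x^{[k+1]} = T(x^{[k]}), started from any initial point x^{[0]} ∈ ℝ^N, converges to the unique fixed point x* of T; moreover the convergence is geometric: ‖x^{[k]} − x*‖_∞ ≤ κ^k · ‖x^{[0]} − x*‖_∞ for every k, where κ = max_i (Σ_{j=1}^N g_{ij})/(2b_i) < 1. -/
/-- Proposition 1: under Assumption 1, the simultaneous best-response iteration converges
from any starting point to the unique fixed point `x*` of `T`, geometrically with rate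
`κ = max_i (Σ_j g_{ij}) / (2 bᵢ) < 1`. -/
theorem stmt4 (N : ℕ) (hN : 1 ≤ N)
    (a b r : Fin N → ℝ) (c : ℝ) (hb : ∀ i, 0 < b i)
    (G : Matrix (Fin N) (Fin N) ℝ)
    (hGsym : ∀ i j, G i j = G j i)
    (hGnonneg : ∀ i j, 0 ≤ G i j)
    (hGdiag : ∀ i, G i i = 0)
    (hA : ∀ i, ∑ j, G i j < 2 * b i)
    (T : (Fin N → ℝ) → (Fin N → ℝ))
    (hT : ∀ x i, T x i = max 0 ((r i - c + a i + ∑ j, G i j * x j) / (2 * b i)))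
    (xstar : Fin N → ℝ) (hfix : T xstar = xstar)
    (huniq : ∀ y : Fin N → ℝ, T y = y → y = xstar)
    (κ : ℝ) (hκ : κ = ⨆ i, (∑ j, G i j) / (2 * b i)) :
    κ < 1 ∧
    ∀ x0 : Fin N → ℝ,
      Filter.Tendsto (fun k => T^[k] x0) Filter.atTop (nhds xstar) ∧
      ∀ k : ℕ, ‖T^[k] x0 - xstar‖ ≤ κ ^ k * ‖x0 - xstar‖ := by
  haveI : Nonempty (Fin N) := ⟨⟨0, hN⟩⟩
  set f : Fin N → ℝ := fun i => (∑ j, G i j) / (2 * b i) with hf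
  have hb2 : ∀ i, 0 < 2 * b i := fun i => by have := hb i; positivity
  have hf_nonneg : ∀ i, 0 ≤ f i := fun i =>
    div_nonneg (Finset.sum_nonneg fun j _ => hGnonneg i j) (hb2 i).le
  have hf_lt : ∀ i, f i < 1 := fun i => (div_lt_one (hb2 i)).2 (hA i)
  have hle : ∀ i, f i ≤ κ := fun i => hκ ▸ le_ciSup (Set.Finite.bddAbove (Set.finite_range f)) i
  obtain ⟨i₀, hi₀⟩ := Finite.exists_max f
  have hκ_eq : κ = f i₀ := le_antisymm (hκ ▸ ciSup_le hi₀) (hle i₀)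
  have hκ_lt : κ < 1 := hκ_eq ▸ hf_lt i₀
  have hκ_nonneg : 0 ≤ κ := hκ_eq ▸ hf_nonneg i₀
  -- key contraction estimate
  have key : ∀ x y : Fin N → ℝ, ‖T x - T y‖ ≤ κ * ‖x - y‖ := by
    intro x y
    rw [pi_norm_le_iff_of_nonneg (by positivity)]
    intro i
    set A := (r i - c + a i + ∑ j, G i j * x j) / (2 * b i) with hA'
    set B := (r i - c + a i + ∑ j, G i j * y j) / (2 * b i) with hB'
    have h1 : ‖(T x - T y) i‖ = |max A 0 - max B 0| := by
      simp [hT, Real.norm_eq_abs, max_comm]; rfl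
    have h2 : |A - B| = |∑ j, G i j * (x j - y j)| / (2 * b i) := by
      rw [hA', hB', div_sub_div_same, abs_div, abs_of_pos (hb2 i)]
      congr 2
      rw [show (∑ j, G i j * (x j - y j)) = (∑ j, G i j * x j) - ∑ j, G i j * y j by
        rw [← Finset.sum_sub_distrib]; exact Finset.sum_congr rfl fun j _ => mul_sub _ _ _]
      ring
    have h3 : |∑ j, G i j * (x j - y j)| ≤ (∑ j, G i j) * ‖x - y‖ := by
      calc |∑ j, G i j * (x j - y j)| ≤ ∑ j, |G i j * (x j - y j)| :=
            Finset.abs_sum_le_sum_abs _ _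
        _ ≤ ∑ j, G i j * ‖x - y‖ := by
            apply Finset.sum_le_sum
            intro j _
            rw [abs_mul, abs_of_nonneg (hGnonneg i j)]
            exact mul_le_mul_of_nonneg_left
              (by simpa using norm_le_pi_norm (x - y) j) (hGnonneg i j)
        _ = (∑ j, G i j) * ‖x - y‖ := by rw [← Finset.sum_mul]
    calc ‖(T x - T y) i‖ = |max A 0 - max B 0| := h1
      _ ≤ |A - B| := abs_max_sub_max_le_abs _ _ _
      _ = |∑ j, G i j * (x j - y j)| / (2 * b i) := h2
      _ ≤ ((∑ j, G i j) * ‖x - y‖) / (2 * b i) := by gcongr; exact (hb2 i).le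
      _ = f i * ‖x - y‖ := by rw [hf]; ring
      _ ≤ κ * ‖x - y‖ := mul_le_mul_of_nonneg_right (hle i) (norm_nonneg _)
  refine ⟨hκ_lt, fun x0 => ?_⟩
  have hbound : ∀ k : ℕ, ‖T^[k] x0 - xstar‖ ≤ κ ^ k * ‖x0 - xstar‖ := by
    intro k
    induction k with
    | zero => simp
    | succ k ih =>
      calc ‖T^[k+1] x0 - xstar‖ = ‖T (T^[k] x0) - T xstar‖ := by
            rw [Function.iterate_succ_apply', hfix]
      _ ≤ κ * ‖T^[k] x0 - xstar‖ := key _ _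
      _ ≤ κ * (κ ^ k * ‖x0 - xstar‖) := mul_le_mul_of_nonneg_left ih hκ_nonneg
      _ = κ ^ (k+1) * ‖x0 - xstar‖ := by ring
  refine ⟨?_, hbound⟩
  rw [tendsto_iff_norm_sub_tendsto_zero]
  apply squeeze_zero (fun k => norm_nonneg _) hbound
  have : Filter.Tendsto (fun k : ℕ => κ ^ k) Filter.atTop (nhds 0) :=
    tendsto_pow_atTop_nhds_zero_of_lt_one hκ_nonneg hκ_lt
  simpa using this.mul_const ‖x0 - xstar‖
end

section
/- Under Assumption 1, let x ∈ ℝ^N be any fixed point of the best-response map T with all coordinates nonnegative, and let i be an index attaining the largest coordinate of x (x_i = max_j x_j). Then x_i ≤ |r_i − c + a_i| / (2b_i − Σ_{j=1}^N g_{ij}). In particular ‖x‖_∞ ≤ max_i |r_i − c + a_i| / (2b_i − Σ_{j=1}^N g_{ij}). -/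
/-- Bound on any nonnegative fixed point of the best-response map: the largest coordinate
`xᵢ` satisfies `xᵢ ≤ |rᵢ − c + aᵢ| / (2 bᵢ − Σ_j g_{ij})`, and hence the sup norm of `x`
is at most `max_i |rᵢ − c + aᵢ| / (2 bᵢ − Σ_j g_{ij})`. -/
theorem stmt5 (N : ℕ) (hN : 1 ≤ N)
    (a b r : Fin N → ℝ) (c : ℝ) (hb : ∀ i, 0 < b i)
    (G : Matrix (Fin N) (Fin N) ℝ)
    (hGsym : ∀ i j, G i j = G j i)
    (hGnonneg : ∀ i j, 0 ≤ G i j)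
    (hGdiag : ∀ i, G i i = 0)
    (hA : ∀ i, ∑ j, G i j < 2 * b i)
    (x : Fin N → ℝ)
    (hfix : ∀ i, x i = max 0 ((r i - c + a i + ∑ j, G i j * x j) / (2 * b i)))
    (hxnn : ∀ j, 0 ≤ x j)
    (i : Fin N) (hi : ∀ j, x j ≤ x i) :
    x i ≤ |r i - c + a i| / (2 * b i - ∑ j, G i j) ∧
    ‖x‖ ≤ ⨆ i', |r i' - c + a i'| / (2 * b i' - ∑ j, G i' j) := by
  have hden : ∀ k, 0 < 2 * b k - ∑ j, G k j := fun k => by linarith [hA k]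
  have hf : ∀ k : Fin N, 0 ≤ |r k - c + a k| / (2 * b k - ∑ j, G k j) :=
    fun k => div_nonneg (abs_nonneg _) (hden k).le
  have hmain : x i ≤ |r i - c + a i| / (2 * b i - ∑ j, G i j) := by
    rcases le_or_gt (x i) 0 with h0 | h0
    · exact le_trans h0 (hf i)
    · have hx := hfix i
      have hpos : x i = (r i - c + a i + ∑ j, G i j * x j) / (2 * b i) := by
        rcases max_cases 0 ((r i - c + a i + ∑ j, G i j * x j) / (2 * b i)) with ⟨h1,h2⟩|⟨h1,h2⟩
        · rw [hx, h1] at h0; linarith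
        · rw [hx, h1]
      have hb2 : (0:ℝ) < 2 * b i := by linarith [hb i]
      have heq : 2 * b i * x i = r i - c + a i + ∑ j, G i j * x j := by
        field_simp [(hb i).ne'] at hpos; linarith [hpos]
      have hsum : ∑ j, G i j * x j ≤ (∑ j, G i j) * x i := by
        rw [Finset.sum_mul]
        exact Finset.sum_le_sum fun j _ => mul_le_mul_of_nonneg_left (hi j) (hGnonneg i j)
      have h1 : (2 * b i - ∑ j, G i j) * x i ≤ r i - c + a i := by nlinarith
      have h2 : r i - c + a i ≤ |r i - c + a i| := le_abs_self _
      rw [le_div_iff₀ (hden i)]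
      linarith
  refine ⟨hmain, ?_⟩
  have hbdd : BddAbove (Set.range fun i' => |r i' - c + a i'| / (2 * b i' - ∑ j, G i' j)) :=
    Set.Finite.bddAbove (Set.finite_range _)
  have hsup : x i ≤ ⨆ i', |r i' - c + a i'| / (2 * b i' - ∑ j, G i' j) :=
    le_trans hmain (le_ciSup hbdd i)
  have hM : 0 ≤ ⨆ i', |r i' - c + a i'| / (2 * b i' - ∑ j, G i' j) :=
    le_trans (hf i) (le_ciSup hbdd i)
  rw [pi_norm_le_iff_of_nonneg hM]
  intro j
  rw [Real.norm_eq_abs, abs_of_nonneg (hxnn j)]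
  exact le_trans (hi j) hsup
end

section
/- Under Assumption 1 and with μ > 0, t > 0, s > 0, the CSP's discriminatory-reward revenue function Π : ℝ^N → ℝ, Π(r) = μ(s·1ᵀx − t·xᵀx) − rᵀx with x = K(a + r − c·1) and K = (B − G)^{-1}, is a strictly concave function of r. -/
open scoped Matrix

/-- A symmetric strictly diagonally dominant matrix with nonneg off-diagonal structure
(of the form diagonal(2b) - G) is positive definite. -/
lemma aux_posdef (N : ℕ) (b : Fin N → ℝ)
    (G : Matrix (Fin N) (Fin N) ℝ)
    (hGsym : ∀ i j, G i j = G j i)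
    (hGnonneg : ∀ i j, 0 ≤ G i j)
    (hA : ∀ i, ∑ j, G i j < 2 * b i) :
    (Matrix.diagonal (fun i => 2 * b i) - G).PosDef := by
  refine Matrix.posDef_iff_dotProduct_mulVec.mpr ⟨?_, ?_⟩
  · apply Matrix.IsHermitian.sub
    · exact Matrix.isHermitian_diagonal _
    · ext i j
      simp [Matrix.conjTranspose_apply, hGsym j i]
  · intro z hz
    have hquad : star z ⬝ᵥ ((Matrix.diagonal (fun i => 2 * b i) - G) *ᵥ z)
        = (∑ i, 2 * b i * (z i)^2) - ∑ i, ∑ j, G i j * z i * z j := by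
      have e1 : z ⬝ᵥ (Matrix.diagonal (fun i => 2 * b i) *ᵥ z) = ∑ i, 2 * b i * (z i)^2 := by
        simp only [dotProduct, Matrix.mulVec_diagonal]
        exact Finset.sum_congr rfl fun i _ => by ring
      have e2 : z ⬝ᵥ (G *ᵥ z) = ∑ i, ∑ j, G i j * z i * z j := by
        simp only [dotProduct, Matrix.mulVec]
        refine Finset.sum_congr rfl fun i _ => ?_
        rw [Finset.mul_sum]
        exact Finset.sum_congr rfl fun j _ => by ring
      rw [star_trivial, Matrix.sub_mulVec, dotProduct_sub, e1, e2]
    rw [hquad]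
    have h1 : ∑ i, ∑ j, G i j * z i * z j ≤ ∑ i, (∑ j, G i j) * (z i)^2 := by
      have step : ∑ i, ∑ j, G i j * z i * z j
          ≤ ∑ i, ∑ j, G i j * ((z i)^2 + (z j)^2) / 2 := by
        apply Finset.sum_le_sum; intro i _
        apply Finset.sum_le_sum; intro j _
        nlinarith [hGnonneg i j, sq_nonneg (z i - z j)]
      have eqn : ∑ i, ∑ j, G i j * ((z i)^2 + (z j)^2) / 2
          = ∑ i, (∑ j, G i j) * (z i)^2 := by
        have split : ∑ i, ∑ j, G i j * ((z i)^2 + (z j)^2) / 2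
            = (∑ i, ∑ j, G i j * (z i)^2 / 2) + ∑ i, ∑ j, G i j * (z j)^2 / 2 := by
          rw [← Finset.sum_add_distrib]
          congr 1; funext i
          rw [← Finset.sum_add_distrib]
          congr 1; funext j; ring
        have swap : ∑ i, ∑ j, G i j * (z j)^2 / 2 = ∑ i, ∑ j, G i j * (z i)^2 / 2 := by
          rw [Finset.sum_comm]
          congr 1; funext i
          congr 1; funext j
          rw [hGsym j i]
        rw [split, swap, ← Finset.sum_add_distrib]
        congr 1; funext i
        rw [← Finset.sum_add_distrib, Finset.sum_mul]
        congr 1; funext j; ring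
      linarith [step, eqn.le, eqn.ge]
    have h2 : ∑ i, (∑ j, G i j) * (z i)^2 < ∑ i, 2 * b i * (z i)^2 := by
      obtain ⟨i0, hi0⟩ : ∃ i, z i ≠ 0 := by
        by_contra h
        push_neg at h
        exact hz (funext h)
      apply Finset.sum_lt_sum
      · intro i _
        exact mul_le_mul_of_nonneg_right (hA i).le (sq_nonneg _)
      · exact ⟨i0, Finset.mem_univ i0, by
          have : 0 < (z i0)^2 := by positivity
          exact mul_lt_mul_of_pos_right (hA i0) this⟩
    linarith

/-- Under Assumption 1, with `μ, t, s > 0`, the CSP's discriminatory-reward revenue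
`Π(r) = μ (s·1ᵀx − t·xᵀx) − rᵀx`, with `x = K (a + r − c·1)` and `K = (B − G)⁻¹`,
is a strictly concave function of `r`. -/
theorem stmt7 (N : ℕ) (hN : 1 ≤ N)
    (a b : Fin N → ℝ) (c : ℝ) (hb : ∀ i, 0 < b i)
    (G : Matrix (Fin N) (Fin N) ℝ)
    (hGsym : ∀ i j, G i j = G j i)
    (hGnonneg : ∀ i j, 0 ≤ G i j)
    (hGdiag : ∀ i, G i i = 0)
    (hA : ∀ i, ∑ j, G i j < 2 * b i)
    (B : Matrix (Fin N) (Fin N) ℝ)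
    (hB : B = Matrix.diagonal (fun i => 2 * b i))
    (μ s t : ℝ) (hμ : 0 < μ) (hs : 0 < s) (ht : 0 < t)
    (K : Matrix (Fin N) (Fin N) ℝ) (hK : K = (B - G)⁻¹)
    (Rev : (Fin N → ℝ) → ℝ)
    (hRev : ∀ r : Fin N → ℝ,
      Rev r = μ * (s * ∑ i, (K *ᵥ (fun j => a j + r j - c)) i
                  - t * ∑ i, ((K *ᵥ (fun j => a j + r j - c)) i) ^ 2)
              - ∑ i, r i * (K *ᵥ (fun j => a j + r j - c)) i) :
    StrictConcaveOn ℝ Set.univ Rev := by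
  -- K is positive definite
  have hMpd : (B - G).PosDef := by
    rw [hB]; exact aux_posdef N b G hGsym hGnonneg hA
  have hKpd : K.PosDef := by
    rw [hK]; exact hMpd.inv
  -- Rev as a single sum
  have expand : ∀ r : Fin N → ℝ,
      Rev r = ∑ i, (μ * s * (K *ᵥ (fun j => a j + r j - c)) i
        - μ * t * ((K *ᵥ (fun j => a j + r j - c)) i) ^ 2
        - r i * (K *ᵥ (fun j => a j + r j - c)) i) := by
    intro r
    rw [hRev]
    simp only [Finset.sum_sub_distrib, ← Finset.mul_sum]
    ring
  constructor
  · exact convex_univ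
  · intro x _ y _ hxy p q hp hq hpq
    set u1 : Fin N → ℝ := K *ᵥ (fun j => a j + x j - c) with hu1
    set u2 : Fin N → ℝ := K *ᵥ (fun j => a j + y j - c) with hu2
    have hU : K *ᵥ (fun j => a j + (p • x + q • y) j - c)
        = fun i => p * u1 i + q * u2 i := by
      have hv : (fun j => a j + (p • x + q • y) j - c)
          = p • (fun j => a j + x j - c) + q • (fun j => a j + y j - c) := by
        funext j
        simp only [Pi.add_apply, Pi.smul_apply, smul_eq_mul]
        linear_combination (c - a j) * hpq
      rw [hv, Matrix.mulVec_add, Matrix.mulVec_smul, Matrix.mulVec_smul]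
      funext i
      simp [hu1, hu2]
    -- positive correction term
    set S : ℝ := ∑ i, (μ * t * (u1 i - u2 i) ^ 2 + (x i - y i) * (u1 i - u2 i)) with hS
    have hSpos : 0 < S := by
      have hd : (fun i => x i - y i) ≠ 0 := by
        intro h
        apply hxy
        funext i
        have := congrFun h i
        simp only [Pi.zero_apply] at this
        linarith
      have hdu : u1 - u2 = K *ᵥ (fun i => x i - y i) := by
        have hvd : ((fun j => a j + x j - c) - fun j => a j + y j - c)
            = (fun i => x i - y i) := by
          funext j
          show (a j + x j - c) - (a j + y j - c) = x j - y j
          ring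
        rw [hu1, hu2, ← Matrix.mulVec_sub, hvd]
      have hpos : 0 < ∑ i, (x i - y i) * (u1 i - u2 i) := by
        have := hKpd.dotProduct_mulVec_pos (x := fun i => x i - y i) hd
        rw [star_trivial] at this
        calc (0:ℝ) < (fun i => x i - y i) ⬝ᵥ (K *ᵥ (fun i => x i - y i)) := this
          _ = ∑ i, (x i - y i) * (u1 i - u2 i) := by
              rw [← hdu]; simp [dotProduct]
      have hnn : 0 ≤ ∑ i, μ * t * (u1 i - u2 i) ^ 2 := by
        apply Finset.sum_nonneg; intro i _; positivity
      rw [hS, Finset.sum_add_distrib]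
      linarith
    -- key identity
    have key : Rev (p • x + q • y) = p * Rev x + q * Rev y + p * q * S := by
      rw [expand, expand, expand, hS]
      simp only [hU, Finset.mul_sum, ← Finset.sum_add_distrib]
      refine Finset.sum_congr rfl fun i _ => ?_
      simp only [Pi.add_apply, Pi.smul_apply, smul_eq_mul]
      have hq' : q = 1 - p := by linarith
      subst hq'
      ring
    rw [smul_eq_mul, smul_eq_mul]
    have : 0 < p * q * S := by positivity
    linarith [key.ge, key.le]
end

section
/- (Optimal uniform reward, Eq. (8)) Under Assumption 1 and with μ > 0, t > 0, s > 0, the scalar D = 2μt·1ᵀK²1 + 2·1ᵀK1 is strictly positive, and the uniform reward r* = D^{-1}{ μ[s·1ᵀK1 − 2t(a − c·1)ᵀK²1] − 1ᵀK(a − c·1) } is the unique global maximizer over r ∈ ℝ of the uniform-reward revenue Π_u(r) = μ(s·1ᵀx − t·xᵀx) − r·1ᵀx, where x = K(a + (r − c)·1). -/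
open scoped Matrix

lemma posdefBG (N : ℕ)
    (b : Fin N → ℝ)
    (G : Matrix (Fin N) (Fin N) ℝ)
    (hGsym : ∀ i j, G i j = G j i)
    (hGnonneg : ∀ i j, 0 ≤ G i j)
    (hA : ∀ i, ∑ j, G i j < 2 * b i)
    (B : Matrix (Fin N) (Fin N) ℝ)
    (hB : B = Matrix.diagonal (fun i => 2 * b i)) :
    (B - G).PosDef := by
  refine Matrix.PosDef.of_dotProduct_mulVec_pos ?_ ?_
  · show (B - G)ᴴ = B - G
    ext i j
    simp only [Matrix.conjTranspose_apply, Matrix.sub_apply, star_sub, hB,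
      Matrix.diagonal_apply, star_trivial]
    rcases eq_or_ne j i with h | h
    · simp [h]
    · simp [h, Ne.symm h, hGsym j i]
  · intro x hx
    have hstar : star x = x := by simp
    rw [hstar]
    have hexp : x ⬝ᵥ ((B - G) *ᵥ x)
        = (∑ i, 2 * b i * x i ^ 2) - ∑ i, ∑ j, G i j * x i * x j := by
      rw [Matrix.sub_mulVec, dotProduct_sub]
      congr 1
      · rw [hB]
        simp only [dotProduct, Matrix.mulVec_diagonal]
        apply Finset.sum_congr rfl; intro i _; ring
      · simp only [dotProduct, Matrix.mulVec, dotProduct, Finset.mul_sum]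
        apply Finset.sum_congr rfl; intro i _
        apply Finset.sum_congr rfl; intro j _; ring
    rw [hexp, sub_pos]
    have h1 : ∑ i, ∑ j, G i j * x i * x j ≤ ∑ i, (∑ j, G i j) * x i ^ 2 := by
      have step : ∑ i, ∑ j, G i j * x i * x j
          ≤ ∑ i, ∑ j, (G i j * x i ^ 2 / 2 + G i j * x j ^ 2 / 2) := by
        apply Finset.sum_le_sum; intro i _
        apply Finset.sum_le_sum; intro j _
        nlinarith [sq_nonneg (x i - x j), hGnonneg i j]
      refine step.trans (le_of_eq ?_)
      have e2 : ∑ i, ∑ j, G i j * x j ^ 2 / 2 = ∑ i, ∑ j, G i j * x i ^ 2 / 2 := by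
        rw [Finset.sum_comm]
        apply Finset.sum_congr rfl; intro i _
        apply Finset.sum_congr rfl; intro j _
        rw [hGsym j i]
      simp only [Finset.sum_add_distrib, e2]
      rw [← Finset.sum_add_distrib]
      apply Finset.sum_congr rfl; intro i _
      rw [← Finset.sum_add_distrib, Finset.sum_mul]
      apply Finset.sum_congr rfl; intro j _; ring
    have h2 : ∑ i, (∑ j, G i j) * x i ^ 2 < ∑ i, 2 * b i * x i ^ 2 := by
      obtain ⟨i₀, hi₀⟩ := Function.ne_iff.mp hx
      apply Finset.sum_lt_sum
      · intro i _
        exact mul_le_mul_of_nonneg_right (hA i).le (sq_nonneg _)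
      · refine ⟨i₀, Finset.mem_univ _, ?_⟩
        have hne : x i₀ ≠ 0 := by simpa using hi₀
        have : 0 < x i₀ ^ 2 := by positivity
        exact mul_lt_mul_of_pos_right (hA i₀) this
    exact h1.trans_lt h2

lemma dotSymmAux (N : ℕ) (K : Matrix (Fin N) (Fin N) ℝ)
    (hKsym : ∀ i j, K i j = K j i) (w y : Fin N → ℝ) :
    w ⬝ᵥ (K *ᵥ y) = ∑ j, (K *ᵥ w) j * y j := by
  simp only [dotProduct, Matrix.mulVec, dotProduct, Finset.mul_sum,
    Finset.sum_mul]
  rw [Finset.sum_comm]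
  apply Finset.sum_congr rfl; intro j _
  apply Finset.sum_congr rfl; intro i _
  rw [hKsym j i]; ring

/-- Optimal uniform reward (Eq. (8)): `D = 2μt·1ᵀK²1 + 2·1ᵀK1 > 0` and
`r* = D⁻¹ { μ [s·1ᵀK1 − 2t (a − c·1)ᵀK²1] − 1ᵀK(a − c·1) }` is the unique global
maximizer of the uniform-reward revenue. -/
theorem stmt9 (N : ℕ) (hN : 1 ≤ N)
    (a b : Fin N → ℝ) (c : ℝ) (hb : ∀ i, 0 < b i)
    (G : Matrix (Fin N) (Fin N) ℝ)
    (hGsym : ∀ i j, G i j = G j i)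
    (hGnonneg : ∀ i j, 0 ≤ G i j)
    (hGdiag : ∀ i, G i i = 0)
    (hA : ∀ i, ∑ j, G i j < 2 * b i)
    (B : Matrix (Fin N) (Fin N) ℝ)
    (hB : B = Matrix.diagonal (fun i => 2 * b i))
    (μ s t : ℝ) (hμ : 0 < μ) (hs : 0 < s) (ht : 0 < t)
    (K : Matrix (Fin N) (Fin N) ℝ) (hK : K = (B - G)⁻¹)
    (ones : Fin N → ℝ) (hones : ones = fun _ => 1)
    (D : ℝ)
    (hD : D = 2 * μ * t * (ones ⬝ᵥ ((K * K) *ᵥ ones)) + 2 * (ones ⬝ᵥ (K *ᵥ ones)))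
    (rstar : ℝ)
    (hrstar : rstar = D⁻¹ * (μ * (s * (ones ⬝ᵥ (K *ᵥ ones))
        - 2 * t * ((fun i => a i - c) ⬝ᵥ ((K * K) *ᵥ ones)))
        - ones ⬝ᵥ (K *ᵥ (fun i => a i - c))))
    (Revu : ℝ → ℝ)
    (hRevu : ∀ r : ℝ,
      Revu r = μ * (s * ∑ i, (K *ᵥ (fun j => a j + (r - c))) i
                  - t * ∑ i, ((K *ᵥ (fun j => a j + (r - c))) i) ^ 2)
              - r * ∑ i, (K *ᵥ (fun j => a j + (r - c))) i) :
    0 < D ∧ (∀ r : ℝ, Revu r ≤ Revu rstar) ∧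
      (∀ r : ℝ, Revu r = Revu rstar → r = rstar) := by
  have hMpd := posdefBG N b G hGsym hGnonneg hA B hB
  have hKpd : K.PosDef := by rw [hK]; exact hMpd.inv
  have hKsym : ∀ i j, K i j = K j i := by
    intro i j
    have h := congrFun (congrFun hKpd.isHermitian.eq j) i
    simpa [Matrix.conjTranspose_apply] using h
  set v := K *ᵥ ones with hv
  set u := K *ᵥ (fun i => a i - c) with hu
  set Sv := ∑ i, v i with hSv
  set Su := ∑ i, u i with hSu
  set Qvv := ∑ i, v i ^ 2 with hQvv
  set Quv := ∑ i, u i * v i with hQuv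
  set Quu := ∑ i, u i ^ 2 with hQuu
  -- identities for the dot products in hD / hrstar
  have id1 : ones ⬝ᵥ (K *ᵥ ones) = Sv := by
    simp [dotProduct, hones, hv, hSv]
  have idKK : (K * K) *ᵥ ones = K *ᵥ v := by rw [hv, Matrix.mulVec_mulVec]
  have id2 : ones ⬝ᵥ ((K * K) *ᵥ ones) = Qvv := by
    rw [idKK, dotSymmAux N K hKsym ones v, ← hv]
    apply Finset.sum_congr rfl; intro j _; ring
  have id3 : (fun i => a i - c) ⬝ᵥ ((K * K) *ᵥ ones) = Quv := by
    rw [idKK, dotSymmAux N K hKsym (fun i => a i - c) v, ← hu]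
  have id4 : ones ⬝ᵥ (K *ᵥ (fun i => a i - c)) = Su := by
    simp [dotProduct, hones, hu, hSu]
  rw [id1, id2] at hD
  rw [id1, id3, id4] at hrstar
  -- the equilibrium vector is affine in r
  have hx : ∀ (r : ℝ) (i : Fin N), (K *ᵥ (fun j => a j + (r - c))) i = u i + r * v i := by
    intro r i
    simp only [hu, hv, Matrix.mulVec, dotProduct, hones, mul_one,
      Finset.mul_sum, ← Finset.sum_add_distrib]
    apply Finset.sum_congr rfl; intro j _; ring
  have hS : ∀ r : ℝ, ∑ i, (K *ᵥ (fun j => a j + (r - c))) i = Su + r * Sv := by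
    intro r
    simp only [hx, Finset.sum_add_distrib, hSu, hSv, Finset.mul_sum]
  have hQ : ∀ r : ℝ, ∑ i, ((K *ᵥ (fun j => a j + (r - c))) i) ^ 2
      = Quu + 2 * r * Quv + r ^ 2 * Qvv := by
    intro r
    have e : ∀ i, (u i + r * v i) ^ 2
        = u i ^ 2 + 2 * r * (u i * v i) + r ^ 2 * v i ^ 2 := by intro i; ring
    simp only [hx, e, Finset.sum_add_distrib, ← Finset.mul_sum, hQuu, hQuv, hQvv]
  have hRev : ∀ r : ℝ, Revu r
      = μ * (s * (Su + r * Sv) - t * (Quu + 2 * r * Quv + r ^ 2 * Qvv))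
        - r * (Su + r * Sv) := by
    intro r; rw [hRevu r, hS r, hQ r]
  -- positivity of D
  have honesne : ones ≠ 0 := by
    intro h
    have : ones ⟨0, hN⟩ = 0 := by rw [h]; rfl
    rw [hones] at this; norm_num at this
  have hSvpos : 0 < Sv := by
    have h := hKpd.dotProduct_mulVec_pos honesne
    rwa [show star ones = ones by simp, id1] at h
  have hQvvnn : 0 ≤ Qvv := Finset.sum_nonneg fun i _ => sq_nonneg _
  have hDpos : 0 < D := by
    rw [hD]
    nlinarith [mul_nonneg (mul_nonneg hμ.le ht.le) hQvvnn, hSvpos]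
  have hDne : D ≠ 0 := ne_of_gt hDpos
  have hA1 : D * rstar = μ * (s * Sv - 2 * t * Quv) - Su := by
    rw [hrstar]; field_simp
  have key : ∀ r : ℝ, Revu rstar - Revu r = (D / 2) * (rstar - r) ^ 2 := by
    intro r
    rw [hRev r, hRev rstar]
    linear_combination (r - rstar) * hA1 + ((rstar ^ 2 - r ^ 2) / 2) * hD
  refine ⟨hDpos, fun r => ?_, fun r hr => ?_⟩
  · nlinarith [key r, sq_nonneg (rstar - r)]
  · have h0 := key r
    rw [hr, sub_self] at h0
    have h2 : (rstar - r) ^ 2 = 0 := by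
      rcases mul_eq_zero.mp h0.symm with h | h
      · exact absurd h (by positivity)
      · exact h
    have := pow_eq_zero_iff (n := 2) (by norm_num) |>.mp h2
    linarith [sub_eq_zero.mp this]
end

section
/- The map X ↦ 1ᵀX^{-1}1 is convex on the set of symmetric positive definite N×N real matrices: for all symmetric positive definite D, E ∈ ℝ^{N×N} and all β ∈ [0, 1], the matrix βD + (1−β)E is symmetric positive definite and 1ᵀ(βD + (1−β)E)^{-1}1 ≤ β·1ᵀD^{-1}1 + (1−β)·1ᵀE^{-1}1. -/
open scoped Matrix

lemma key_bound {N : ℕ} (X : Matrix (Fin N) (Fin N) ℝ) (hX : X.PosDef) (a y : Fin N → ℝ) :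
    2 * (a ⬝ᵥ y) - y ⬝ᵥ X *ᵥ y ≤ a ⬝ᵥ X⁻¹ *ᵥ a := by
  have hXinv : X * X⁻¹ = 1 := Matrix.mul_nonsing_inv X (isUnit_iff_ne_zero.mpr hX.det_pos.ne')
  have hXs : Xᵀ = X := hX.isHermitian.eq
  have hXinvs : (X⁻¹)ᵀ = X⁻¹ := (Matrix.transpose_nonsing_inv X).trans (by rw [hXs])
  set z := y - X⁻¹ *ᵥ a with hz
  have h0 : 0 ≤ z ⬝ᵥ X *ᵥ z := by simpa using hX.posSemidef.dotProduct_mulVec_nonneg z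
  have e1 : X *ᵥ (X⁻¹ *ᵥ a) = a := by
    rw [Matrix.mulVec_mulVec, hXinv, Matrix.one_mulVec]
  have e2 : (X⁻¹ *ᵥ a) ⬝ᵥ X *ᵥ y = a ⬝ᵥ y := by
    rw [Matrix.dotProduct_mulVec, ← Matrix.mulVec_transpose, hXs, e1]
  have e3 : y ⬝ᵥ X *ᵥ (X⁻¹ *ᵥ a) = a ⬝ᵥ y := by
    rw [e1, dotProduct_comm]
  have e4 : (X⁻¹ *ᵥ a) ⬝ᵥ X *ᵥ (X⁻¹ *ᵥ a) = a ⬝ᵥ X⁻¹ *ᵥ a := by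
    rw [e1, dotProduct_comm]
  have expand : z ⬝ᵥ X *ᵥ z
      = y ⬝ᵥ X *ᵥ y - 2 * (a ⬝ᵥ y) + a ⬝ᵥ X⁻¹ *ᵥ a := by
    rw [hz, Matrix.mulVec_sub, sub_dotProduct, dotProduct_sub,
      dotProduct_sub, e2, e3, e4]
    ring
  linarith [expand ▸ h0]

/-- The map `X ↦ 1ᵀ X⁻¹ 1` is convex on symmetric positive definite matrices:
for PD `D, E` and `β ∈ [0,1]`, `βD + (1−β)E` is PD and
`1ᵀ(βD + (1−β)E)⁻¹1 ≤ β·1ᵀD⁻¹1 + (1−β)·1ᵀE⁻¹1`. -/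
theorem stmt11 (N : ℕ) (hN : 1 ≤ N)
    (D E : Matrix (Fin N) (Fin N) ℝ) (hD : D.PosDef) (hE : E.PosDef)
    (β : ℝ) (hβ0 : 0 ≤ β) (hβ1 : β ≤ 1)
    (ones : Fin N → ℝ) (hones : ones = fun _ => 1) :
    (β • D + (1 - β) • E).PosDef ∧
    ones ⬝ᵥ ((β • D + (1 - β) • E)⁻¹ *ᵥ ones)
      ≤ β * (ones ⬝ᵥ (D⁻¹ *ᵥ ones)) + (1 - β) * (ones ⬝ᵥ (E⁻¹ *ᵥ ones)) := by
  set F := β • D + (1 - β) • E with hFdef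
  have hquad : ∀ x : Fin N → ℝ, x ⬝ᵥ F *ᵥ x = β * (x ⬝ᵥ D *ᵥ x) + (1 - β) * (x ⬝ᵥ E *ᵥ x) := by
    intro x
    simp [hFdef, Matrix.add_mulVec, Matrix.smul_mulVec, dotProduct_add,
      dotProduct_smul, smul_eq_mul]
  have hF : F.PosDef := by
    refine Matrix.PosDef.of_dotProduct_mulVec_pos ?_ ?_
    · show Fᴴ = F
      have h1 : Dᵀ = D := hD.isHermitian.eq
      have h2 : Eᵀ = E := hE.isHermitian.eq
      rw [hFdef]
      simp [Matrix.conjTranspose_add, Matrix.conjTranspose_smul, h1, h2]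
    · intro x hx
      have hDx : 0 < x ⬝ᵥ D *ᵥ x := by simpa using hD.dotProduct_mulVec_pos hx
      have hEx : 0 < x ⬝ᵥ E *ᵥ x := by simpa using hE.dotProduct_mulVec_pos hx
      have : 0 < x ⬝ᵥ F *ᵥ x := by
        rw [hquad x]
        rcases lt_or_eq_of_le hβ0 with h | h
        · nlinarith
        · rw [← h]; nlinarith
      simpa using this
  refine ⟨hF, ?_⟩
  set y := F⁻¹ *ᵥ ones with hy
  have hFy : F *ᵥ y = ones := by
    rw [hy, Matrix.mulVec_mulVec, Matrix.mul_nonsing_inv F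
      (isUnit_iff_ne_zero.mpr hF.det_pos.ne'), Matrix.one_mulVec]
  have hyF : y ⬝ᵥ F *ᵥ y = ones ⬝ᵥ y := by rw [hFy, dotProduct_comm]
  have hD' := mul_le_mul_of_nonneg_left (key_bound D hD ones y) hβ0
  have hE' := mul_le_mul_of_nonneg_left (key_bound E hE ones y) (by linarith : (0:ℝ) ≤ 1 - β)
  have := hquad y
  have hgoal : ones ⬝ᵥ y ≤ β * (ones ⬝ᵥ D⁻¹ *ᵥ ones) + (1 - β) * (ones ⬝ᵥ E⁻¹ *ᵥ ones) := by
    nlinarith [hyF, this]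
  simpa [hy] using hgoal
end

section
/- (Average-reward identity, Eq. (9)) Under Assumption 1 and with μ > 0, t > 0, s > 0, and homogeneous intrinsic value a_i = ā for all i (ā ∈ ℝ), the average of the optimal discriminatory rewards satisfies (1/N)·1ᵀ(2I + 2μtK)^{-1}{ μ[s·1 − 2tK(ā − c)·1] − (ā − c)·1 } = (c − ā)/2 + μs/2 − (μt/N)(μs + ā − c)·1ᵀ[2(B − G) + 2μtI]^{-1}1, where K = (B − G)^{-1}. -/
open scoped Matrix

lemma aux_det13 {N : ℕ} (G : Matrix (Fin N) (Fin N) ℝ) (hGnonneg : ∀ i j, 0 ≤ G i j)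
    (hGdiag : ∀ i, G i i = 0) (e : Fin N → ℝ)
    (h : ∀ i, ∑ j, G i j < e i) :
    (Matrix.diagonal e - G).det ≠ 0 := by
  apply det_ne_zero_of_sum_row_lt_diag
  intro k
  have he : 0 < e k := lt_of_le_of_lt (Finset.sum_nonneg fun j _ => hGnonneg k j) (h k)
  have h1 : ∀ j ∈ Finset.univ.erase k, ‖(Matrix.diagonal e - G) k j‖ = G k j := by
    intro j hj
    have hjk : k ≠ j := fun hh => (Finset.mem_erase.mp hj).1 hh.symm
    simp [Matrix.sub_apply, Matrix.diagonal_apply_ne _ hjk, abs_of_nonneg (hGnonneg k j)]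
  rw [Finset.sum_congr rfl h1]
  have h2 : (Matrix.diagonal e - G) k k = e k := by simp [hGdiag k]
  rw [h2, Real.norm_eq_abs, abs_of_pos he]
  calc ∑ j ∈ Finset.univ.erase k, G k j ≤ ∑ j, G k j :=
        Finset.sum_le_sum_of_subset_of_nonneg (Finset.erase_subset _ _)
          (fun j _ _ => hGnonneg k j)
    _ < e k := h k

/-- Average-reward identity (Eq. (9)): with homogeneous intrinsic value `a_i = ā`,
`(1/N)·1ᵀ(2I + 2μtK)⁻¹{ μ[s·1 − 2tK(ā − c)·1] − (ā − c)·1 }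
  = (c − ā)/2 + μs/2 − (μt/N)(μs + ā − c)·1ᵀ[2(B − G) + 2μtI]⁻¹1`. -/
theorem stmt13 (N : ℕ) (hN : 1 ≤ N)
    (b : Fin N → ℝ) (hb : ∀ i, 0 < b i)
    (abar c μ s t : ℝ) (hμ : 0 < μ) (hs : 0 < s) (ht : 0 < t)
    (G : Matrix (Fin N) (Fin N) ℝ)
    (hGsym : ∀ i j, G i j = G j i)
    (hGnonneg : ∀ i j, 0 ≤ G i j)
    (hGdiag : ∀ i, G i i = 0)
    (hA : ∀ i, ∑ j, G i j < 2 * b i)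
    (B : Matrix (Fin N) (Fin N) ℝ)
    (hB : B = Matrix.diagonal (fun i => 2 * b i))
    (K : Matrix (Fin N) (Fin N) ℝ) (hK : K = (B - G)⁻¹)
    (ones : Fin N → ℝ) (hones : ones = fun _ => 1) :
    (1 / (N : ℝ)) * (ones ⬝ᵥ
        (((2 : ℝ) • (1 : Matrix (Fin N) (Fin N) ℝ) + (2 * μ * t) • K)⁻¹ *ᵥ
          (fun i => μ * (s - 2 * t * ((abar - c) * (K *ᵥ ones) i)) - (abar - c))))
      = (c - abar) / 2 + μ * s / 2
        - (μ * t / (N : ℝ)) * (μ * s + abar - c) *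
          (ones ⬝ᵥ
            (((2 : ℝ) • (B - G) + (2 * μ * t) • (1 : Matrix (Fin N) (Fin N) ℝ))⁻¹ *ᵥ ones)) := by
  have hN0 : (N : ℝ) ≠ 0 := by
    have : (0:ℝ) < N := by exact_mod_cast Nat.lt_of_lt_of_le Nat.zero_lt_one hN
    linarith
  set M : Matrix (Fin N) (Fin N) ℝ := B - G with hM
  set P : Matrix (Fin N) (Fin N) ℝ :=
    (2 : ℝ) • M + (2 * μ * t) • (1 : Matrix (Fin N) (Fin N) ℝ) with hP
  set A : Matrix (Fin N) (Fin N) ℝ :=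
    (2 : ℝ) • (1 : Matrix (Fin N) (Fin N) ℝ) + (2 * μ * t) • K with hAdef
  -- invertibility of M
  have hMdet : M.det ≠ 0 := by
    have : M = Matrix.diagonal (fun i => 2 * b i) - G := by rw [hM, hB]
    rw [this]
    exact aux_det13 G hGnonneg hGdiag _ hA
  have hMu : IsUnit M.det := isUnit_iff_ne_zero.mpr hMdet
  -- invertibility of P
  have hPdet : P.det ≠ 0 := by
    have hPeq : P = Matrix.diagonal (fun i => 2 * (2 * b i) + 2 * μ * t)
        - ((2:ℝ) • G) := by
      rw [hP, hM, hB]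
      ext i j
      by_cases hij : i = j
      · subst hij
        simp [Matrix.diagonal_apply_eq, hGdiag i, Matrix.one_apply_eq]
      · simp [Matrix.diagonal_apply_ne _ hij, Matrix.one_apply_ne hij]
    rw [hPeq]
    apply aux_det13
    · intro i j; have := hGnonneg i j; simp [Matrix.smul_apply]; linarith
    · intro i; simp [Matrix.smul_apply, hGdiag i]
    · intro i
      have h1 : ∑ j, ((2:ℝ) • G) i j = 2 * ∑ j, G i j := by
        simp [Matrix.smul_apply, Finset.mul_sum]
      rw [h1]
      have := hA i
      have := mul_pos (mul_pos two_pos hμ) ht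
      linarith
  have hPu : IsUnit P.det := isUnit_iff_ne_zero.mpr hPdet
  have hKM : K = M⁻¹ := by rw [hK, hM]
  have hKinv : K⁻¹ = M := by rw [hKM, Matrix.nonsing_inv_nonsing_inv _ hMu]
  have hKMul : K * M = 1 := by rw [hKM]; exact Matrix.nonsing_inv_mul M hMu
  -- A = K * P
  have hAKP : A = K * P := by
    rw [hAdef, hP, Matrix.mul_add, Matrix.mul_smul, Matrix.mul_smul, hKMul,
      Matrix.mul_one]
  -- A inverse
  have hKu : IsUnit K.det := by
    rw [hKM, Matrix.det_nonsing_inv]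
    exact isUnit_iff_ne_zero.mpr (by simp [Ring.inverse_eq_inv', hMdet])
  have hAu : IsUnit A.det := by
    rw [hAKP, Matrix.det_mul]
    exact hKu.mul hPu
  have hAinv : A⁻¹ = P⁻¹ * M := by
    rw [hAKP, Matrix.mul_inv_rev, hKinv]
  have hMP : M = (1/2 : ℝ) • P - (μ * t) • (1 : Matrix (Fin N) (Fin N) ℝ) := by
    rw [hP]
    ext i j
    simp [Matrix.smul_apply, Matrix.add_apply, Matrix.sub_apply]
    ring
  have hAinv2 : A⁻¹ = (1/2 : ℝ) • (1 : Matrix (Fin N) (Fin N) ℝ) - (μ * t) • P⁻¹ := by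
    rw [hAinv, hMP, Matrix.mul_sub, Matrix.mul_smul, Matrix.mul_smul,
      Matrix.nonsing_inv_mul P hPu, Matrix.mul_one]
  -- vector identity
  have hv : (fun i => μ * (s - 2 * t * ((abar - c) * (K *ᵥ ones) i)) - (abar - c))
      = (μ * s + abar - c) • ones - (abar - c) • (A *ᵥ ones) := by
    funext i
    have hAv : (A *ᵥ ones) i = 2 * ones i + (2 * μ * t) * (K *ᵥ ones) i := by
      rw [hAdef, Matrix.add_mulVec, Matrix.smul_mulVec, Matrix.smul_mulVec,
        Matrix.one_mulVec]
      simp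
    simp only [Pi.sub_apply, Pi.smul_apply, smul_eq_mul, hAv]
    simp only [hones]
    ring
  rw [hv]
  have hAAones : A⁻¹ *ᵥ (A *ᵥ ones) = ones := by
    rw [Matrix.mulVec_mulVec, Matrix.nonsing_inv_mul A hAu, Matrix.one_mulVec]
  have hdot1 : ones ⬝ᵥ ones = (N : ℝ) := by
    simp [hones, dotProduct]
  have hq : ones ⬝ᵥ (A⁻¹ *ᵥ ones)
      = (1/2 : ℝ) * (N : ℝ) - (μ * t) * (ones ⬝ᵥ (P⁻¹ *ᵥ ones)) := by
    rw [hAinv2, Matrix.sub_mulVec, Matrix.smul_mulVec, Matrix.smul_mulVec,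
      Matrix.one_mulVec, dotProduct_sub, dotProduct_smul,
      dotProduct_smul, hdot1]
    simp
  rw [Matrix.mulVec_sub, Matrix.mulVec_smul, Matrix.mulVec_smul, hAAones,
    dotProduct_sub, dotProduct_smul, dotProduct_smul,
    hq, hdot1]
  simp only [smul_eq_mul]
  field_simp
  ring
end

section
/- (Theorem 2, finite-expectation form) Let the diagonal parameters b be random with finitely many scenarios b^{(1)}, …, b^{(m)} (each b^{(k)}_i > 0) occurring with probabilities p_1, …, p_m ≥ 0 summing to 1, and suppose each scenario satisfies Assumption 1: Σ_{j=1}^N g_{ij} < 2b^{(k)}_i for all i, k. Let B^{(k)} be the diagonal matrix with entries 2b^{(k)}_i and B̄ = Σ_k p_k B^{(k)}. If c ≥ ā + μs, then the expected average optimal reward is bounded below as: Σ_k p_k [ (c − ā)/2 + μs/2 − (μt/N)(μs + ā − c)·1ᵀ(2(B^{(k)} − G) + 2μtI)^{-1}1 ] ≥ (c − ā)/2 + μs/2 − (μt/N)(μs + ā − c)·1ᵀ(2B̄ − 2G + 2μtI)^{-1}1. -/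
open scoped Matrix
open Matrix

lemma symm_dot {N : ℕ} {M : Matrix (Fin N) (Fin N) ℝ} (hM : Mᵀ = M)
    (x z : Fin N → ℝ) : x ⬝ᵥ (M *ᵥ z) = (M *ᵥ x) ⬝ᵥ z := by
  rw [dotProduct_mulVec, ← mulVec_transpose, hM, dotProduct_comm]

lemma quad_var {N : ℕ} {A : Matrix (Fin N) (Fin N) ℝ} (hA : A.PosDef)
    (v y : Fin N → ℝ) :
    2 * (y ⬝ᵥ v) - y ⬝ᵥ (A *ᵥ y) ≤ v ⬝ᵥ (A⁻¹ *ᵥ v) := by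
  have hdet : IsUnit A.det := (Matrix.isUnit_iff_isUnit_det A).mp hA.isUnit
  have hAt : Aᵀ = A := by
    have h := hA.isHermitian
    exact Matrix.isHermitian_iff_isSymm.mp h
  have hAinvt : A⁻¹ᵀ = A⁻¹ := by
    rw [Matrix.transpose_nonsing_inv, hAt]
  set w : Fin N → ℝ := A⁻¹ *ᵥ v - y with hw
  have h0 : 0 ≤ w ⬝ᵥ (A *ᵥ w) := by
    have := hA.posSemidef.dotProduct_mulVec_nonneg w
    simpa using this
  have hAAinv : A *ᵥ (A⁻¹ *ᵥ v) = v := by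
    rw [Matrix.mulVec_mulVec, Matrix.mul_nonsing_inv _ hdet, Matrix.one_mulVec]
  have hAinvA : ∀ z, A⁻¹ *ᵥ (A *ᵥ z) = z := fun z => by
    rw [Matrix.mulVec_mulVec, Matrix.nonsing_inv_mul _ hdet, Matrix.one_mulVec]
  have key : w ⬝ᵥ (A *ᵥ w) =
      v ⬝ᵥ (A⁻¹ *ᵥ v) - 2 * (y ⬝ᵥ v) + y ⬝ᵥ (A *ᵥ y) := by
    have e1 : A *ᵥ w = v - A *ᵥ y := by
      rw [hw, Matrix.mulVec_sub, hAAinv]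
    rw [hw, e1, sub_dotProduct, dotProduct_sub, dotProduct_sub]
    have e2 : (A⁻¹ *ᵥ v) ⬝ᵥ v = v ⬝ᵥ (A⁻¹ *ᵥ v) := dotProduct_comm _ _
    have e3 : (A⁻¹ *ᵥ v) ⬝ᵥ (A *ᵥ y) = v ⬝ᵥ y := by
      rw [← symm_dot hAinvt v (A *ᵥ y), hAinvA]
    have e4 : y ⬝ᵥ v = v ⬝ᵥ y := dotProduct_comm _ _
    rw [e2, e3, e4]
    ring
  linarith [key, h0]

lemma dd_posdef {N : ℕ} (G : Matrix (Fin N) (Fin N) ℝ)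
    (hGsym : ∀ i j, G i j = G j i) (hGnonneg : ∀ i j, 0 ≤ G i j)
    (d : Fin N → ℝ) (hd : ∀ i, 2 * ∑ j, G i j < d i) :
    (Matrix.diagonal d - (2 : ℝ) • G).PosDef := by
  refine Matrix.PosDef.of_dotProduct_mulVec_pos ?_ ?_
  · show (Matrix.diagonal d - (2:ℝ) • G)ᴴ = _
    ext i j
    simp only [Matrix.conjTranspose_apply, Matrix.sub_apply, Matrix.smul_apply,
      Matrix.diagonal_apply, star_trivial, smul_eq_mul]
    by_cases h : i = j
    · subst h; rfl
    · rw [if_neg h, if_neg (fun hh => h hh.symm), hGsym j i]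
  · intro x hx
    have expand : (star x) ⬝ᵥ ((Matrix.diagonal d - (2:ℝ) • G) *ᵥ x)
        = ∑ i, d i * x i ^ 2 - 2 * ∑ i, ∑ j, G i j * (x i * x j) := by
      simp only [star_trivial]
      rw [Matrix.sub_mulVec, dotProduct_sub]
      congr 1
      · simp only [dotProduct, Matrix.mulVec_diagonal]
        exact Finset.sum_congr rfl fun i _ => by ring
      · rw [Matrix.smul_mulVec, dotProduct_smul, smul_eq_mul]
        congr 1
        simp only [dotProduct, Matrix.mulVec]
        refine Finset.sum_congr rfl fun i _ => ?_
        rw [Finset.mul_sum]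
        exact Finset.sum_congr rfl fun j _ => by ring
    have hbound : 2 * ∑ i, ∑ j, G i j * (x i * x j)
        ≤ 2 * ∑ i, (∑ j, G i j) * x i ^ 2 := by
      have h1 : ∀ i j, 2 * (G i j * (x i * x j)) ≤ G i j * (x i ^2 + x j ^2) := by
        intro i j
        nlinarith [mul_nonneg (hGnonneg i j) (sq_nonneg (x i - x j))]
      calc 2 * ∑ i, ∑ j, G i j * (x i * x j)
          = ∑ i, ∑ j, 2 * (G i j * (x i * x j)) := by
            rw [Finset.mul_sum]
            exact Finset.sum_congr rfl fun i _ => by rw [Finset.mul_sum]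
        _ ≤ ∑ i, ∑ j, G i j * (x i ^2 + x j ^2) :=
            Finset.sum_le_sum fun i _ => Finset.sum_le_sum fun j _ => h1 i j
        _ = ∑ i, (∑ j, G i j) * x i ^2 + ∑ i, ∑ j, G i j * x j ^2 := by
            rw [← Finset.sum_add_distrib]
            refine Finset.sum_congr rfl fun i _ => ?_
            rw [Finset.sum_mul, ← Finset.sum_add_distrib]
            exact Finset.sum_congr rfl fun j _ => by ring
        _ = 2 * ∑ i, (∑ j, G i j) * x i ^ 2 := by
            have h2 : ∑ i, ∑ j, G i j * x j ^2 = ∑ i, (∑ j, G i j) * x i ^ 2 := by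
              rw [Finset.sum_comm]
              refine Finset.sum_congr rfl fun j _ => ?_
              rw [Finset.sum_mul]
              exact Finset.sum_congr rfl fun i _ => by rw [hGsym j i]
            rw [h2]; ring
    have hlow : ∑ i, (d i - 2 * ∑ j, G i j) * x i ^ 2
        ≤ (star x) ⬝ᵥ ((Matrix.diagonal d - (2:ℝ) • G) *ᵥ x) := by
      rw [expand]
      have h3 : ∑ i, (d i - 2 * ∑ j, G i j) * x i ^ 2
          = ∑ i, d i * x i ^ 2 - 2 * ∑ i, (∑ j, G i j) * x i ^ 2 := by
        rw [Finset.mul_sum, ← Finset.sum_sub_distrib]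
        exact Finset.sum_congr rfl fun i _ => by ring
      rw [h3]
      linarith [hbound]
    refine lt_of_lt_of_le ?_ hlow
    obtain ⟨i0, hi0⟩ := Function.ne_iff.mp hx
    refine Finset.sum_pos'
      (fun i _ => mul_nonneg (by linarith [hd i]) (sq_nonneg _))
      ⟨i0, Finset.mem_univ _,
        mul_pos (by linarith [hd i0]) (pow_two_pos_of_ne_zero hi0)⟩

lemma mulVec_sum_smul {N m : ℕ} (A : Fin m → Matrix (Fin N) (Fin N) ℝ)
    (p : Fin m → ℝ) (x : Fin N → ℝ) :
    (∑ k, p k • A k) *ᵥ x = ∑ k, p k • (A k *ᵥ x) := by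
  ext i
  simp only [Matrix.mulVec, dotProduct, Matrix.sum_apply, Finset.sum_apply,
    Matrix.smul_apply, Pi.smul_apply, smul_eq_mul, Finset.sum_mul]
  rw [Finset.sum_comm]
  refine Finset.sum_congr rfl fun k _ => ?_
  rw [Finset.mul_sum]
  exact Finset.sum_congr rfl fun j _ => by ring

lemma dot_sum_smul {N m : ℕ} (w : Fin m → Fin N → ℝ) (p : Fin m → ℝ)
    (y : Fin N → ℝ) : y ⬝ᵥ (∑ k, p k • w k) = ∑ k, p k * (y ⬝ᵥ w k) := by
  simp only [dotProduct, Finset.sum_apply, Pi.smul_apply, smul_eq_mul,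
    Finset.mul_sum]
  rw [Finset.sum_comm]
  exact Finset.sum_congr rfl fun k _ => Finset.sum_congr rfl fun i _ => by ring

lemma posdef_convex {N m : ℕ} (A : Fin m → Matrix (Fin N) (Fin N) ℝ)
    (hA : ∀ k, (A k).PosDef) (p : Fin m → ℝ) (hp : ∀ k, 0 ≤ p k)
    (hps : ∑ k, p k = 1) : (∑ k, p k • A k).PosDef := by
  refine Matrix.PosDef.of_dotProduct_mulVec_pos ?_ ?_
  · show (∑ k, p k • A k)ᴴ = _
    rw [Matrix.conjTranspose_sum]
    refine Finset.sum_congr rfl fun k _ => ?_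
    rw [Matrix.conjTranspose_smul, (hA k).isHermitian.eq, star_trivial]
  · intro x hx
    have expand : (star x) ⬝ᵥ ((∑ k, p k • A k) *ᵥ x)
        = ∑ k, p k * ((star x) ⬝ᵥ (A k *ᵥ x)) := by
      rw [mulVec_sum_smul, dot_sum_smul]
    rw [expand]
    have hex : ∃ k, 0 < p k := by
      by_contra h
      push_neg at h
      have h0 : ∑ k, p k = 0 :=
        Finset.sum_eq_zero fun k _ => le_antisymm (h k) (hp k)
      rw [h0] at hps; norm_num at hps
    obtain ⟨k0, hk0⟩ := hex
    exact Finset.sum_pos'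
      (fun k _ => mul_nonneg (hp k) ((hA k).posSemidef.dotProduct_mulVec_nonneg x))
      ⟨k0, Finset.mem_univ _, mul_pos hk0 ((hA k0).dotProduct_mulVec_pos hx)⟩

lemma jensen_inv {N m : ℕ} (A : Fin m → Matrix (Fin N) (Fin N) ℝ)
    (hA : ∀ k, (A k).PosDef) (p : Fin m → ℝ) (hp : ∀ k, 0 ≤ p k)
    (hps : ∑ k, p k = 1) (v : Fin N → ℝ) :
    v ⬝ᵥ ((∑ k, p k • A k)⁻¹ *ᵥ v) ≤ ∑ k, p k * (v ⬝ᵥ ((A k)⁻¹ *ᵥ v)) := by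
  set Abar := ∑ k, p k • A k with hAbar
  have hbar : Abar.PosDef := posdef_convex A hA p hp hps
  have hdet : IsUnit Abar.det := (Matrix.isUnit_iff_isUnit_det _).mp hbar.isUnit
  set y : Fin N → ℝ := Abar⁻¹ *ᵥ v with hy
  have hterm : ∀ k, p k * (2 * (y ⬝ᵥ v) - y ⬝ᵥ (A k *ᵥ y))
      ≤ p k * (v ⬝ᵥ ((A k)⁻¹ *ᵥ v)) :=
    fun k => mul_le_mul_of_nonneg_left (quad_var (hA k) v y) (hp k)
  have hsum : ∑ k, p k * (2 * (y ⬝ᵥ v) - y ⬝ᵥ (A k *ᵥ y))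
      = 2 * (y ⬝ᵥ v) - y ⬝ᵥ (Abar *ᵥ y) := by
    have hdp : y ⬝ᵥ (Abar *ᵥ y) = ∑ k, p k * (y ⬝ᵥ (A k *ᵥ y)) := by
      rw [hAbar, mulVec_sum_smul, dot_sum_smul]
    simp_rw [mul_sub]
    rw [Finset.sum_sub_distrib, ← Finset.sum_mul, hps, one_mul, hdp]
  have hAy : Abar *ᵥ y = v := by
    rw [hy, Matrix.mulVec_mulVec, Matrix.mul_nonsing_inv _ hdet, Matrix.one_mulVec]
  have hyv : y ⬝ᵥ v = v ⬝ᵥ (Abar⁻¹ *ᵥ v) := by rw [hy, dotProduct_comm]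
  have hfinal : v ⬝ᵥ (Abar⁻¹ *ᵥ v) = 2 * (y ⬝ᵥ v) - y ⬝ᵥ (Abar *ᵥ y) := by
    rw [hAy, ← hyv]; ring
  rw [hfinal, ← hsum]
  exact Finset.sum_le_sum fun k _ => hterm k

/-- Theorem 2 (finite-expectation form): if `c ≥ ā + μs`, the expected average optimal reward
over finitely many scenarios for `b` is bounded below by the expression obtained by replacing
`B` with its expectation `B̄`. -/
theorem stmt14 (N m : ℕ) (hN : 1 ≤ N) (hm : 1 ≤ m)
    (abar c μ s t : ℝ) (hμ : 0 < μ) (hs : 0 < s) (ht : 0 < t)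
    (G : Matrix (Fin N) (Fin N) ℝ)
    (hGsym : ∀ i j, G i j = G j i)
    (hGnonneg : ∀ i j, 0 ≤ G i j)
    (hGdiag : ∀ i, G i i = 0)
    (b : Fin m → Fin N → ℝ) (hb : ∀ k i, 0 < b k i)
    (hA : ∀ k i, ∑ j, G i j < 2 * b k i)
    (p : Fin m → ℝ) (hp : ∀ k, 0 ≤ p k) (hps : ∑ k, p k = 1)
    (B : Fin m → Matrix (Fin N) (Fin N) ℝ)
    (hB : ∀ k, B k = Matrix.diagonal (fun i => 2 * b k i))
    (Bbar : Matrix (Fin N) (Fin N) ℝ) (hBbar : Bbar = ∑ k, p k • B k)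
    (ones : Fin N → ℝ) (hones : ones = fun _ => 1)
    (hc : abar + μ * s ≤ c) :
    (∑ k, p k * ((c - abar) / 2 + μ * s / 2
        - (μ * t / (N : ℝ)) * (μ * s + abar - c) *
          (ones ⬝ᵥ
            (((2 : ℝ) • (B k - G) + (2 * μ * t) • (1 : Matrix (Fin N) (Fin N) ℝ))⁻¹ *ᵥ ones))))
      ≥ (c - abar) / 2 + μ * s / 2
        - (μ * t / (N : ℝ)) * (μ * s + abar - c) *
          (ones ⬝ᵥ
            (((2 : ℝ) • Bbar - (2 : ℝ) • G + (2 * μ * t) • (1 : Matrix (Fin N) (Fin N) ℝ))⁻¹ *ᵥ ones)) := by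
  set M : Fin m → Matrix (Fin N) (Fin N) ℝ :=
    fun k => (2 : ℝ) • (B k - G) + (2 * μ * t) • (1 : Matrix (Fin N) (Fin N) ℝ) with hM
  set Mbar : Matrix (Fin N) (Fin N) ℝ :=
    (2 : ℝ) • Bbar - (2 : ℝ) • G + (2 * μ * t) • (1 : Matrix (Fin N) (Fin N) ℝ) with hMbar
  have hMk : ∀ k, M k = Matrix.diagonal (fun i => 4 * b k i + 2 * μ * t) - (2 : ℝ) • G := by
    intro k
    ext i j
    simp only [hM, hB, Matrix.add_apply, Matrix.sub_apply, Matrix.smul_apply,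
      Matrix.one_apply, Matrix.diagonal_apply, smul_eq_mul]
    by_cases h : i = j
    · subst h; simp [hGdiag i]; ring
    · simp [h]
  have hMkPD : ∀ k, (M k).PosDef := by
    intro k
    rw [hMk k]
    refine dd_posdef G hGsym hGnonneg _ fun i => ?_
    have h1 := hA k i
    have h2 : 0 < μ * t := mul_pos hμ ht
    have h3 : 0 ≤ ∑ j, G i j := Finset.sum_nonneg fun j _ => hGnonneg i j
    linarith
  have hsumM : ∑ k, p k • M k = Mbar := by
    ext i j
    simp only [hM, hMbar, hBbar, Matrix.sum_apply, Matrix.smul_apply, Matrix.add_apply,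
      Matrix.sub_apply, Matrix.one_apply, smul_eq_mul]
    have h : ∀ k, p k * (2 * (B k i j - G i j) + 2 * μ * t * (if i = j then (1:ℝ) else 0))
        = 2 * (p k * B k i j) + (-(2 * G i j) + 2 * μ * t * (if i = j then (1:ℝ) else 0)) * p k :=
      fun k => by ring
    rw [Finset.sum_congr rfl fun k _ => h k, Finset.sum_add_distrib, ← Finset.mul_sum,
      ← Finset.mul_sum, hps]
    ring
  have hJ : ones ⬝ᵥ (Mbar⁻¹ *ᵥ ones) ≤ ∑ k, p k * (ones ⬝ᵥ ((M k)⁻¹ *ᵥ ones)) := by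
    rw [← hsumM]
    exact jensen_inv M hMkPD p hp hps ones
  set K := (μ * t / (N : ℝ)) * (μ * s + abar - c) with hK
  have hKle : K ≤ 0 := by
    have h1 : 0 ≤ μ * t / (N : ℝ) := div_nonneg (by positivity) (Nat.cast_nonneg N)
    have h2 : μ * s + abar - c ≤ 0 := by linarith
    exact mul_nonpos_of_nonneg_of_nonpos h1 h2
  set C := (c - abar) / 2 + μ * s / 2 with hC
  set q : Fin m → ℝ := fun k => ones ⬝ᵥ ((M k)⁻¹ *ᵥ ones) with hq
  have hL : ∑ k, p k * (C - K * q k) = C - K * ∑ k, p k * q k := by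
    have h : ∀ k, p k * (C - K * q k) = C * p k - K * (p k * q k) := fun k => by ring
    rw [Finset.sum_congr rfl fun k _ => h k, Finset.sum_sub_distrib, ← Finset.mul_sum,
      ← Finset.mul_sum, hps, mul_one]
  show ∑ k, p k * (C - K * q k) ≥ C - K * (ones ⬝ᵥ (Mbar⁻¹ *ᵥ ones))
  rw [hL]
  nlinarith [hJ, hKle]
end
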